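/- arXiv:2601.10260 — 2 statements merged into one kernel-verified Lean document; each statement's English description precedes it below -/
import Mathlib

section
/- Let W₁,…,W_n ∈ ℂ^{N×N} be Hermitian positive semidefinite matrices that are linearly independent over ℝ, let G ∈ ℂ^{N×N} be Hermitian positive definite, and for p ∈ ℝⁿ set W(p) = ∑_{i=1}^n p_i W_i. If the feasible set {p ∈ Δ : W(p) is positive definite} is nonempty, then the minimization problem: minimize tr(G · W(p)⁻¹) subject to p ∈ Δ and W(p) positive definite, admits a unique optimal solution. -/
open Matrix
open scoped ComplexOrder

variable {N : ℕ}

section compat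
open scoped MatrixOrder

noncomputable def Matrix.PosSemidef.sqrt {A : Matrix (Fin N) (Fin N) ℂ} (_hA : A.PosSemidef) :
    Matrix (Fin N) (Fin N) ℂ := CFC.sqrt A

lemma Matrix.PosSemidef.sqrt_mul_self {A : Matrix (Fin N) (Fin N) ℂ} (hA : A.PosSemidef) :
    hA.sqrt * hA.sqrt = A := CFC.sqrt_mul_sqrt_self A hA.nonneg

lemma Matrix.PosSemidef.posSemidef_sqrt {A : Matrix (Fin N) (Fin N) ℂ} (hA : A.PosSemidef) :
    hA.sqrt.PosSemidef := (CFC.sqrt_nonneg A).posSemidef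

lemma Matrix.posSemidef_iff_eq_transpose_mul_self {A : Matrix (Fin N) (Fin N) ℂ} :
    A.PosSemidef ↔ ∃ B : Matrix (Fin N) (Fin N) ℂ, A = Bᴴ * B := by
  constructor
  · intro hA
    exact ⟨hA.sqrt, by rw [hA.posSemidef_sqrt.isHermitian.eq, hA.sqrt_mul_self]⟩
  · rintro ⟨B, rfl⟩
    exact Matrix.posSemidef_conjTranspose_mul_self B

end compat

lemma qf_star_eq {A : Matrix (Fin N) (Fin N) ℂ} (hA : A.IsHermitian) (x : Fin N → ℂ) :
    star (star x ⬝ᵥ A *ᵥ x) = star x ⬝ᵥ A *ᵥ x := by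
  conv_lhs => rw [star_dotProduct, star_star, star_mulVec, ← dotProduct_mulVec, hA.eq]

lemma qf_im_zero {A : Matrix (Fin N) (Fin N) ℂ} (hA : A.IsHermitian) (x : Fin N → ℂ) :
    (star x ⬝ᵥ A *ᵥ x).im = 0 := by
  have h2 := congrArg Complex.im (qf_star_eq hA x)
  simp only [Complex.star_def, Complex.conj_im] at h2
  linarith

lemma trace_nonneg_of_psd {A : Matrix (Fin N) (Fin N) ℂ} (hA : A.PosSemidef) :
    0 ≤ A.trace := by
  rw [Matrix.trace]
  apply Finset.sum_nonneg
  intro i _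
  have := hA.dotProduct_mulVec_nonneg (Pi.single i 1)
  simpa [dotProduct, Pi.single_apply] using this

lemma eq_zero_of_trace_psd {A : Matrix (Fin N) (Fin N) ℂ} (hA : A.PosSemidef)
    (h : A.trace = 0) : A = 0 := by
  classical
  obtain ⟨B, rfl⟩ := Matrix.posSemidef_iff_eq_transpose_mul_self.mp hA
  suffices hB : B = 0 by simp [hB]
  have hdiag : ∀ i, (Bᴴ * B) i i = star (fun j => B j i) ⬝ᵥ (fun j => B j i) := by
    intro i
    simp [Matrix.mul_apply, Matrix.conjTranspose_apply, dotProduct]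
  have hnn : ∀ i ∈ Finset.univ, (0:ℂ) ≤ (Bᴴ * B) i i := by
    intro i _
    rw [hdiag i]
    exact dotProduct_star_self_nonneg _
  have hz := (Finset.sum_eq_zero_iff_of_nonneg hnn).mp h
  ext i j
  have := hz j (Finset.mem_univ j)
  rw [hdiag j] at this
  have hcol := dotProduct_star_self_eq_zero.mp this
  exact congrFun hcol i

lemma trace_mul_psd_nonneg {A B : Matrix (Fin N) (Fin N) ℂ} (hA : A.PosSemidef)
    (hB : B.PosSemidef) : 0 ≤ (A * B).trace := by
  classical
  have hs := hB.sqrt_mul_self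
  have h1 : (A * B).trace = (hB.sqrt * A * hB.sqrt).trace := by
    rw [Matrix.trace_mul_cycle, hs, Matrix.trace_mul_comm]
  rw [h1]
  have : (hB.sqrt * A * hB.sqrt).PosSemidef := by
    have := hA.conjTranspose_mul_mul_same hB.sqrt
    rwa [hB.posSemidef_sqrt.isHermitian.eq] at this
  exact trace_nonneg_of_psd this

lemma posDef_of_psd_isUnit {S : Matrix (Fin N) (Fin N) ℂ} (hS : S.PosSemidef)
    (hU : IsUnit S.det) : S.PosDef := by
  refine Matrix.PosDef.of_dotProduct_mulVec_pos hS.1 (fun x hx => ?_)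
  have hne : star x ⬝ᵥ S *ᵥ x ≠ 0 := by
    intro h0
    have hSx := hS.dotProduct_mulVec_zero_iff x |>.mp h0
    have hinj := (Matrix.mulVec_injective_iff_isUnit.mpr (Matrix.isUnit_iff_isUnit_det S |>.mpr hU))
    exact hx (hinj (by simpa using hSx))
  exact lt_of_le_of_ne (hS.dotProduct_mulVec_nonneg x) (Ne.symm hne)

lemma sqrt_det_isUnit {A : Matrix (Fin N) (Fin N) ℂ} (hA : A.PosDef) :
    IsUnit (hA.posSemidef.sqrt).det := by
  have h := hA.posSemidef.sqrt_mul_self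
  have : (hA.posSemidef.sqrt).det * (hA.posSemidef.sqrt).det = A.det := by
    rw [← Matrix.det_mul, h]
  have hd : A.det ≠ 0 := ne_of_gt hA.det_pos
  have : (hA.posSemidef.sqrt).det ≠ 0 := by
    intro h0; rw [h0, mul_zero] at this; exact hd this.symm
  exact isUnit_iff_ne_zero.mpr this

lemma posDef_conj {A R : Matrix (Fin N) (Fin N) ℂ} (hA : A.PosDef) (hR : IsUnit R.det) :
    (Rᴴ * A * R).PosDef := by
  refine Matrix.PosDef.of_dotProduct_mulVec_pos (Matrix.isHermitian_conjTranspose_mul_mul R hA.1) (fun x hx => ?_)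
  have hRx : R *ᵥ x ≠ 0 := by
    intro h0
    have hinj := Matrix.mulVec_injective_iff_isUnit.mpr (Matrix.isUnit_iff_isUnit_det R |>.mpr hR)
    exact hx (hinj (by simpa using h0))
  have := hA.dotProduct_mulVec_pos hRx
  simpa only [star_mulVec, dotProduct_mulVec, vecMul_vecMul] using this

lemma trace_mul_pd_pos {A B : Matrix (Fin N) (Fin N) ℂ} (hA : A.PosDef)
    (hB : B.PosSemidef) (hB0 : B ≠ 0) : 0 < (A * B).trace := by
  classical
  have hle := trace_mul_psd_nonneg hA.posSemidef hB
  refine lt_of_le_of_ne hle (fun h0 => ?_)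
  set S := hB.sqrt with hSdef
  have hs : S * S = B := hB.sqrt_mul_self
  have h1 : (A * B).trace = (S * A * S).trace := by
    rw [Matrix.trace_mul_cycle, hs, Matrix.trace_mul_comm]
  have hSAS : (S * A * S).PosSemidef := by
    have := hA.posSemidef.conjTranspose_mul_mul_same S
    rwa [hB.posSemidef_sqrt.isHermitian.eq] at this
  have hz : S * A * S = 0 := eq_zero_of_trace_psd hSAS (by rw [← h1, ← h0])
  -- deduce S = 0
  set R := hA.posSemidef.sqrt with hRdef
  have hr : R * R = A := hA.posSemidef.sqrt_mul_self
  have hRu : IsUnit R.det := sqrt_det_isUnit hA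
  have hRS : (R * S)ᴴ * (R * S) = S * A * S := by
    rw [Matrix.conjTranspose_mul, hB.posSemidef_sqrt.isHermitian.eq,
      hA.posSemidef.posSemidef_sqrt.isHermitian.eq]
    rw [mul_assoc, ← mul_assoc R R S, hr, ← mul_assoc]
  have hRS0 : R * S = 0 := by
    have := hRS.trans hz
    exact Matrix.conjTranspose_mul_self_eq_zero.mp this
  have hS0 : S = 0 := by
    have := congrArg (fun M => R⁻¹ * M) hRS0
    simpa [← mul_assoc, Matrix.nonsing_inv_mul R hRu] using this
  exact hB0 (by rw [← hs, hS0, mul_zero])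

/-- Cauchy–Schwarz for the complex dot product. -/
lemma dotProduct_cs (x z : Fin N → ℂ) :
    star (star x ⬝ᵥ z) * (star x ⬝ᵥ z) ≤ (star x ⬝ᵥ x) * (star z ⬝ᵥ z) := by
  let x' : EuclideanSpace ℂ (Fin N) := (WithLp.equiv 2 _).symm x
  let z' : EuclideanSpace ℂ (Fin N) := (WithLp.equiv 2 _).symm z
  have h1 : star x ⬝ᵥ z = inner ℂ x' z' := by rw [dotProduct_comm]; rfl
  have h2 : star x ⬝ᵥ x = inner ℂ x' x' := by rw [dotProduct_comm]; rfl
  have h3 : star z ⬝ᵥ z = inner ℂ z' z' := by rw [dotProduct_comm]; rfl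
  rw [h1, h2, h3, inner_self_eq_norm_sq_to_K, inner_self_eq_norm_sq_to_K]
  have hcs := norm_inner_le_norm (𝕜 := ℂ) x' z'
  have habs : star (inner ℂ x' z' : ℂ) * inner ℂ x' z' = ((‖(inner ℂ x' z' : ℂ)‖ : ℂ))^2 := by
    rw [Complex.star_def, ← Complex.normSq_eq_conj_mul_self]
    norm_cast
    rw [← Complex.sq_norm]
  rw [habs]
  have hnn : (0:ℝ) ≤ ‖x'‖ * ‖z'‖ := by positivity
  have h4 : ‖(inner ℂ x' z' : ℂ)‖^2 ≤ (‖x'‖ * ‖z'‖)^2 := by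
    apply pow_le_pow_left₀ (norm_nonneg _) hcs
  have : ((‖(inner ℂ x' z' : ℂ)‖:ℂ))^2 ≤ ((‖x'‖ * ‖z'‖ : ℝ) : ℂ)^2 := by
    rw [← Complex.ofReal_pow, ← Complex.ofReal_pow]
    exact_mod_cast Complex.real_le_real.mpr h4
  calc ((‖(inner ℂ x' z' : ℂ)‖:ℂ))^2 ≤ ((‖x'‖ * ‖z'‖ : ℝ) : ℂ)^2 := this
    _ = (‖x'‖:ℂ)^2 * (‖z'‖:ℂ)^2 := by push_cast; ring

/-- quadratic form bounded by trace times norm². -/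
lemma qf_le_trace {M : Matrix (Fin N) (Fin N) ℂ} (hM : M.PosSemidef) (x : Fin N → ℂ) :
    star x ⬝ᵥ M *ᵥ x ≤ (star x ⬝ᵥ x) * M.trace := by
  classical
  obtain ⟨B, rfl⟩ := Matrix.posSemidef_iff_eq_transpose_mul_self.mp hM
  have hq : star x ⬝ᵥ (Bᴴ * B) *ᵥ x = ∑ j, star ((B *ᵥ x) j) * ((B *ᵥ x) j) := by
    rw [← Matrix.mulVec_mulVec, Matrix.dotProduct_mulVec, Matrix.vecMul_conjTranspose, star_star]
    simp [dotProduct]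
  have htr : (Bᴴ * B).trace = ∑ j, ∑ i, B j i * star (B j i) := by
    rw [Matrix.trace]
    simp only [Matrix.diag_apply, Matrix.mul_apply, Matrix.conjTranspose_apply]
    rw [Finset.sum_comm]
    congr 1; ext j; congr 1; ext i; ring
  rw [hq, htr, Finset.mul_sum]
  apply Finset.sum_le_sum
  intro j _
  have hyj : (B *ᵥ x) j = star (fun i => star (B j i)) ⬝ᵥ x := by
    simp [Matrix.mulVec, dotProduct]
  have hv : star (fun i => star (B j i)) ⬝ᵥ (fun i => star (B j i)) = ∑ i, B j i * star (B j i) := by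
    simp [dotProduct]
  calc star ((B *ᵥ x) j) * ((B *ᵥ x) j)
      ≤ (star (fun i => star (B j i)) ⬝ᵥ (fun i => star (B j i))) * (star x ⬝ᵥ x) := by
        rw [hyj]; exact dotProduct_cs _ x
    _ = (star x ⬝ᵥ x) * ∑ i, B j i * star (B j i) := by rw [hv, mul_comm]

/-- Kantorovich-type bound: (x⋆x)² ≤ (x⋆Vx)(x⋆V⁻¹x) for positive definite V. -/
lemma qf_inv_cs {V : Matrix (Fin N) (Fin N) ℂ} (hV : V.PosDef) (x : Fin N → ℂ) :
    (star x ⬝ᵥ x) * (star x ⬝ᵥ x) ≤ (star x ⬝ᵥ V *ᵥ x) * (star x ⬝ᵥ V⁻¹ *ᵥ x) := by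
  classical
  set S := hV.posSemidef.sqrt with hSdef
  have hs : S * S = V := hV.posSemidef.sqrt_mul_self
  have hSherm : S.IsHermitian := hV.posSemidef.posSemidef_sqrt.isHermitian
  have hSu : IsUnit S.det := sqrt_det_isUnit hV
  have hSiherm : (S⁻¹).IsHermitian := hSherm.inv
  set u := S *ᵥ x with hu
  set v := S⁻¹ *ᵥ x with hv
  have h1 : star v ⬝ᵥ u = star x ⬝ᵥ x := by
    rw [hv, hu, star_mulVec, hSiherm.eq, ← Matrix.dotProduct_mulVec,
      Matrix.mulVec_mulVec, Matrix.nonsing_inv_mul S hSu, Matrix.one_mulVec]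
  have h2 : star u ⬝ᵥ u = star x ⬝ᵥ V *ᵥ x := by
    rw [hu, star_mulVec, hSherm.eq, ← Matrix.dotProduct_mulVec, Matrix.mulVec_mulVec, hs]
  have h3 : star v ⬝ᵥ v = star x ⬝ᵥ V⁻¹ *ᵥ x := by
    rw [hv, star_mulVec, hSiherm.eq, ← Matrix.dotProduct_mulVec, Matrix.mulVec_mulVec,
      ← Matrix.mul_inv_rev, hs]
  have hcs := dotProduct_cs v u
  rw [h1, h2, h3] at hcs
  have hstar : star (star x ⬝ᵥ x) = star x ⬝ᵥ x := by
    simp [dotProduct, Finset.sum_comm]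
    rw [Finset.sum_congr rfl]
    intro i _
    ring
  rw [hstar] at hcs
  calc (star x ⬝ᵥ x) * (star x ⬝ᵥ x) ≤ (star x ⬝ᵥ V⁻¹ *ᵥ x) * (star x ⬝ᵥ V *ᵥ x) := hcs
    _ = (star x ⬝ᵥ V *ᵥ x) * (star x ⬝ᵥ V⁻¹ *ᵥ x) := mul_comm _ _

lemma im_zero_of_nonneg {z : ℂ} (h : 0 ≤ z) : z.im = 0 := by
  rw [Complex.le_def] at h; simpa using h.2.symm

/-- Coercivity: trace bound on inverse gives uniform lower bound on V. -/
lemma coerce {V : Matrix (Fin N) (Fin N) ℂ} (hV : V.PosDef) {t : ℝ} (ht : 0 < t)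
    (htr : (Matrix.trace V⁻¹).re ≤ t) :
    (V - t⁻¹ • (1 : Matrix (Fin N) (Fin N) ℂ)).PosSemidef := by
  classical
  have hsm1 : ((t⁻¹ : ℝ) • (1 : Matrix (Fin N) (Fin N) ℂ)).IsHermitian := by
    unfold Matrix.IsHermitian
    rw [Matrix.conjTranspose_smul, Matrix.conjTranspose_one, star_trivial]
  refine Matrix.PosSemidef.of_dotProduct_mulVec_nonneg (hV.1.sub hsm1) (fun x => ?_)
  rw [Matrix.sub_mulVec, dotProduct_sub, Matrix.smul_mulVec, Matrix.one_mulVec,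
    dotProduct_smul]
  set q := star x ⬝ᵥ V *ᵥ x with hq
  set sc := star x ⬝ᵥ x with hsc
  have hsc_nn : (0:ℂ) ≤ sc := dotProduct_star_self_nonneg x
  have hsim : sc.im = 0 := im_zero_of_nonneg hsc_nn
  have hqim : q.im = 0 := qf_im_zero hV.1 x
  have hq_nn : (0:ℂ) ≤ q := hV.posSemidef.dotProduct_mulVec_nonneg x
  have hkey : t⁻¹ * sc.re ≤ q.re := by
    rcases eq_or_ne x 0 with rfl | hx
    · simp [hsc, hq]
    · have hsc0 : sc ≠ 0 := fun h0 => hx (dotProduct_star_self_eq_zero.mp h0)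
      have hs : 0 < sc.re := by
        have := lt_of_le_of_ne hsc_nn (Ne.symm hsc0)
        exact (Complex.lt_def.mp this).1
      set qi := star x ⬝ᵥ V⁻¹ *ᵥ x with hqi
      have hqiim : qi.im = 0 := qf_im_zero hV.1.inv x
      have hqinn : (0:ℂ) ≤ qi := hV.inv.posSemidef.dotProduct_mulVec_nonneg x
      have h8 := qf_inv_cs hV x
      have h8' : sc.re * sc.re ≤ q.re * qi.re := by
        have := (Complex.le_def.mp h8).1
        simpa [Complex.mul_re, ← hq, ← hqi, ← hsc, hsim, hqim, hqiim] using this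
      have h7 := qf_le_trace hV.inv.posSemidef x
      have htr_im : (Matrix.trace V⁻¹).im = 0 :=
        im_zero_of_nonneg (trace_nonneg_of_psd hV.inv.posSemidef)
      have h7' : qi.re ≤ sc.re * (Matrix.trace V⁻¹).re := by
        have := (Complex.le_def.mp h7).1
        simpa [Complex.mul_re, ← hqi, ← hsc, hsim, htr_im] using this
      have hqre : 0 ≤ q.re := (Complex.le_def.mp hq_nn).1
      have hqire : 0 ≤ qi.re := (Complex.le_def.mp hqinn).1
      have hb : qi.re ≤ sc.re * t :=
        h7'.trans (mul_le_mul_of_nonneg_left htr hs.le)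
      have h9 : sc.re * sc.re ≤ (q.re * t) * sc.re := by nlinarith
      have h10 : sc.re ≤ q.re * t := le_of_mul_le_mul_right h9 hs
      rw [inv_mul_le_iff₀ ht]
      linarith [h10]
  rw [Complex.le_def]
  constructor
  · simp only [Complex.sub_re, Complex.zero_re, Complex.real_smul, Complex.mul_re,
      Complex.ofReal_re, Complex.ofReal_im, hsim, mul_zero, zero_mul, sub_zero]
    linarith
  · simp [Complex.real_smul, Complex.mul_im, hsim, hqim]

lemma real_smul_mat (r : ℝ) (A : Matrix (Fin N) (Fin N) ℂ) :
    r • A = (r : ℂ) • A := by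
  ext i j; simp [Complex.real_smul]

lemma exists_eps_le {G : Matrix (Fin N) (Fin N) ℂ} [Nonempty (Fin N)] (hG : G.PosDef) :
    ∃ ε : ℝ, 0 < ε ∧ (G - ε • (1 : Matrix (Fin N) (Fin N) ℂ)).PosSemidef := by
  classical
  set ε := Finset.univ.inf' Finset.univ_nonempty hG.1.eigenvalues with hε
  refine ⟨ε, ?_, ?_⟩
  · rw [Finset.lt_inf'_iff]
    exact fun i _ => hG.eigenvalues_pos i
  · set U : Matrix (Fin N) (Fin N) ℂ := (hG.1.eigenvectorUnitary : Matrix (Fin N) (Fin N) ℂ)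
      with hU
    have hUU : U * star U = 1 := (Matrix.mem_unitaryGroup_iff).mp hG.1.eigenvectorUnitary.2
    set D : Matrix (Fin N) (Fin N) ℂ := Matrix.diagonal (RCLike.ofReal ∘ hG.1.eigenvalues) with hD
    have hspec : G = U * D * star U := hG.1.spectral_theorem.trans (Unitary.conjStarAlgAut_apply ..)
    have hkey : G - ε • (1 : Matrix (Fin N) (Fin N) ℂ)
        = U * (Matrix.diagonal (fun i => ((hG.1.eigenvalues i - ε : ℝ) : ℂ))) * star U := by
      have hdiag : Matrix.diagonal (fun i => ((hG.1.eigenvalues i - ε : ℝ) : ℂ))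
          = D - (ε:ℂ) • 1 := by
        rw [hD]
        ext i j
        by_cases hij : i = j
        · subst hij; simp [Matrix.diagonal_apply_eq, Matrix.one_apply_eq]
        · simp [Matrix.diagonal_apply_ne _ hij, Matrix.one_apply_ne hij]
      rw [hdiag, mul_sub, sub_mul, ← hspec, mul_smul_comm, smul_mul_assoc, mul_one, hUU,
        real_smul_mat]
    rw [hkey]
    have hdpsd : (Matrix.diagonal (fun i => ((hG.1.eigenvalues i - ε : ℝ) : ℂ))).PosSemidef := by
      rw [Matrix.posSemidef_diagonal_iff]
      intro i
      rw [Complex.zero_le_real]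
      have := Finset.inf'_le hG.1.eigenvalues (Finset.mem_univ i)
      linarith [this]
    have := hdpsd.mul_mul_conjTranspose_same U
    rwa [← Matrix.star_eq_conjTranspose] at this

lemma mul_left_cancel_isUnit {U X Y : Matrix (Fin N) (Fin N) ℂ} (h : IsUnit U.det)
    (hXY : U * X = U * Y) : X = Y := by
  have := congrArg (fun M => U⁻¹ * M) hXY
  simpa [← mul_assoc, Matrix.nonsing_inv_mul U h] using this

lemma posDef_smul {A : Matrix (Fin N) (Fin N) ℂ} {r : ℝ} (hA : A.PosDef) (hr : 0 < r) :
    (r • A).PosDef := by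
  refine Matrix.PosDef.of_dotProduct_mulVec_pos ?_ ?_
  · unfold Matrix.IsHermitian
    rw [Matrix.conjTranspose_smul, star_trivial, hA.1.eq]
  · intro x hx
    rw [Matrix.smul_mulVec, dotProduct_smul]
    have := hA.dotProduct_mulVec_pos hx
    rw [Complex.real_smul]
    exact mul_pos (by exact_mod_cast Complex.zero_lt_real.mpr hr) this

lemma strict_conv {A B Gm : Matrix (Fin N) (Fin N) ℂ} (hA : A.PosDef) (hB : B.PosDef)
    (hAB : A ≠ B) (hG : Gm.PosDef) :
    (Matrix.trace (Gm * ((2⁻¹ : ℝ) • (A + B))⁻¹)).re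
      < 2⁻¹ * (Matrix.trace (Gm * A⁻¹)).re + 2⁻¹ * (Matrix.trace (Gm * B⁻¹)).re := by
  classical
  set S := hA.posSemidef.sqrt with hSdef
  have hS : S * S = A := hA.posSemidef.sqrt_mul_self
  have hSherm : S.IsHermitian := hA.posSemidef.posSemidef_sqrt.isHermitian
  have hSu : IsUnit S.det := sqrt_det_isUnit hA
  have hSiherm : (S⁻¹).IsHermitian := hSherm.inv
  have hSiu : IsUnit (S⁻¹).det := by
    have h1 : S⁻¹.det * S.det = 1 := by
      rw [← Matrix.det_mul, Matrix.nonsing_inv_mul S hSu, Matrix.det_one]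
    exact IsUnit.of_mul_eq_one _ h1
  set T := S⁻¹ * B * S⁻¹ with hTdef
  have hT : T.PosDef := by
    have := posDef_conj hB hSiu
    rwa [hSiherm.eq] at this
  have hTherm : T.IsHermitian := hT.1
  have hTu : IsUnit T.det := hT.det_pos.ne'.isUnit
  have h1T : ((1 : Matrix (Fin N) (Fin N) ℂ) + T).PosDef := Matrix.PosDef.one.add hT
  have h1Tu : IsUnit ((1 : Matrix (Fin N) (Fin N) ℂ) + T).det := h1T.det_pos.ne'.isUnit
  have hBst : B = S * T * S := by
    rw [hTdef, ← mul_assoc, ← mul_assoc, Matrix.mul_nonsing_inv S hSu, one_mul, mul_assoc,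
      Matrix.nonsing_inv_mul S hSu, mul_one]
  set U₀ := T * (1 + T) with hU₀def
  have hU₀pd : U₀.PosDef := by
    have hTT : (T * T).PosSemidef := by
      have := Matrix.posSemidef_conjTranspose_mul_self T
      rwa [hTherm.eq] at this
    have : U₀ = T + T * T := by rw [hU₀def, mul_add, mul_one]
    rw [this]
    exact hT.add_posSemidef hTT
  have hU₀u : IsUnit U₀.det := hU₀pd.det_pos.ne'.isUnit
  set P := U₀⁻¹ with hPdef
  have hPpd : P.PosDef := hU₀pd.inv
  set D := T - 1 with hDdef
  have hDherm : D.IsHermitian := hTherm.sub Matrix.isHermitian_one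
  -- inner identity
  have hU₀Ti : U₀ * T⁻¹ = 1 + T := by
    rw [hU₀def, mul_assoc, add_mul, one_mul, Matrix.mul_nonsing_inv T hTu, mul_add,
      Matrix.mul_nonsing_inv T hTu, mul_one, add_comm]
  have hU₀1Ti : U₀ * (1 + T)⁻¹ = T := by
    rw [hU₀def, mul_assoc, Matrix.mul_nonsing_inv _ h1Tu, mul_one]
  have hDU : D * U₀ = U₀ * D := by rw [hDdef, hU₀def]; noncomm_ring
  have hUP : U₀ * P = 1 := Matrix.mul_nonsing_inv U₀ hU₀u
  have h4T : (4:ℂ) • T = T + T + T + T := by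
    rw [show (4:ℂ) = 1+1+1+1 by norm_num, add_smul, add_smul, add_smul, one_smul]
  have hNid : (1 : Matrix (Fin N) (Fin N) ℂ) + T⁻¹ - (4:ℂ) • (1 + T)⁻¹ = D * (P * D) := by
    apply mul_left_cancel_isUnit hU₀u
    calc U₀ * ((1 : Matrix (Fin N) (Fin N) ℂ) + T⁻¹ - (4:ℂ) • (1 + T)⁻¹)
        = U₀ + U₀ * T⁻¹ - (4:ℂ) • (U₀ * (1 + T)⁻¹) := by
          rw [mul_sub, mul_add, mul_one, mul_smul_comm]
      _ = T * (1 + T) + (1 + T) - (4:ℂ) • T := by rw [hU₀Ti, hU₀1Ti, hU₀def]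
      _ = D * D := by rw [h4T, hDdef]; noncomm_ring
      _ = D * (U₀ * P) * D := by rw [hUP, mul_one]
      _ = U₀ * (D * (P * D)) := by
          rw [← mul_assoc D U₀ P, hDU, mul_assoc, mul_assoc, mul_assoc]
  set Z := D * (P * D) with hZdef
  have hZpsd : Z.PosSemidef := by
    have := hPpd.posSemidef.conjTranspose_mul_mul_same D
    rw [hDherm.eq] at this
    rwa [hZdef, ← mul_assoc]
  have hZne : Z ≠ 0 := by
    intro hZ0
    have hDx : ∀ x : Fin N → ℂ, D *ᵥ x = 0 := by
      intro x
      by_contra hDxne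
      have hq : star x ⬝ᵥ Z *ᵥ x = star (D *ᵥ x) ⬝ᵥ P *ᵥ (D *ᵥ x) := by
        simp only [hZdef, star_mulVec, dotProduct_mulVec, vecMul_vecMul, hDherm.eq,
          Matrix.mul_assoc]
      have hpos := hPpd.dotProduct_mulVec_pos hDxne
      rw [← hq, hZ0] at hpos
      simp at hpos
    have hD0 : D = 0 := by
      ext i j
      have := congrFun (hDx (Pi.single j 1)) i
      simpa [Matrix.mulVec, dotProduct, Pi.single_apply] using this
    have hT1 : T = 1 := by rwa [hDdef, sub_eq_zero] at hD0
    exact hAB (by rw [hBst, hT1, mul_one, hS])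
  -- rewrite inverses
  have hAinv : A⁻¹ = S⁻¹ * (1 * S⁻¹) := by rw [← hS, Matrix.mul_inv_rev, one_mul]
  have hBinv : B⁻¹ = S⁻¹ * (T⁻¹ * S⁻¹) := by
    rw [hBst, Matrix.mul_inv_rev, Matrix.mul_inv_rev]
  have hABsum : A + B = S * (1 + T) * S := by
    rw [hBst, mul_add, add_mul, mul_one, hS]
  have hABinv : (A + B)⁻¹ = S⁻¹ * ((1 + T)⁻¹ * S⁻¹) := by
    rw [hABsum, Matrix.mul_inv_rev, Matrix.mul_inv_rev]
  have hE : A⁻¹ + B⁻¹ - (4:ℂ) • (A + B)⁻¹ = S⁻¹ * Z * S⁻¹ := by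
    rw [← hNid, hAinv, hBinv, hABinv]
    simp only [mul_sub, sub_mul, mul_add, add_mul, mul_smul_comm, smul_mul_assoc, mul_assoc,
      one_mul, mul_one]
  have hGpd' : (S⁻¹ * Gm * S⁻¹).PosDef := by
    have := posDef_conj hG hSiu
    rwa [hSiherm.eq] at this
  have htrpos : 0 < Matrix.trace ((S⁻¹ * Gm * S⁻¹) * Z) := trace_mul_pd_pos hGpd' hZpsd hZne
  have htr_eq : Matrix.trace (Gm * (S⁻¹ * Z * S⁻¹)) = Matrix.trace ((S⁻¹ * Gm * S⁻¹) * Z) := by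
    have h1 : Gm * (S⁻¹ * Z * S⁻¹) = (Gm * S⁻¹ * Z) * S⁻¹ := by simp only [mul_assoc]
    rw [h1, Matrix.trace_mul_comm]
    congr 1
    simp only [mul_assoc]
  have hABu : IsUnit (A + B).det := (hA.add hB).det_pos.ne'.isUnit
  have htrE : Matrix.trace (Gm * A⁻¹) + Matrix.trace (Gm * B⁻¹)
      - (4:ℂ) * Matrix.trace (Gm * (A + B)⁻¹) = Matrix.trace ((S⁻¹ * Gm * S⁻¹) * Z) := by
    rw [← htr_eq, ← hE]
    rw [mul_sub, mul_add, Matrix.trace_sub, Matrix.trace_add, mul_smul_comm, Matrix.trace_smul,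
      smul_eq_mul]
  have hCinv : (((2:ℝ)⁻¹ : ℝ) • (A + B))⁻¹ = (2:ℂ) • (A + B)⁻¹ := by
    rw [real_smul_mat]
    apply Matrix.inv_eq_right_inv
    rw [smul_mul_smul_comm, Matrix.mul_nonsing_inv _ hABu]
    norm_num
  have hgoalL : Matrix.trace (Gm * ((2⁻¹ : ℝ) • (A + B))⁻¹)
      = (2:ℂ) * Matrix.trace (Gm * (A + B)⁻¹) := by
    rw [hCinv, mul_smul_comm, Matrix.trace_smul, smul_eq_mul]
  have hpos_re : 0 < (Matrix.trace ((S⁻¹ * Gm * S⁻¹) * Z)).re := (Complex.lt_def.mp htrpos).1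
  rw [← htrE] at hpos_re
  rw [hgoalL]
  set a := Matrix.trace (Gm * A⁻¹)
  set b := Matrix.trace (Gm * B⁻¹)
  set w := Matrix.trace (Gm * (A + B)⁻¹)
  have hre : 0 < a.re + b.re - 4 * w.re := by
    have : (a + b - (4:ℂ) * w).re = a.re + b.re - 4 * w.re := by
      simp [Complex.sub_re, Complex.add_re, Complex.mul_re]
    linarith [this ▸ hpos_re]
  have h2w : ((2:ℂ) * w).re = 2 * w.re := by simp [Complex.mul_re]
  rw [h2w]
  linarith

theorem stmt7 {n N : ℕ} (W : Fin n → Matrix (Fin N) (Fin N) ℂ)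
    (hpsd : ∀ i, (W i).PosSemidef)
    (hli : LinearIndependent ℝ W)
    (G : Matrix (Fin N) (Fin N) ℂ) (hG : G.PosDef)
    (hfeas : ∃ p : Fin n → ℝ, (∀ i, 0 ≤ p i) ∧ ∑ i, p i = 1 ∧
      (∑ i, p i • W i).PosDef) :
    ∃! p : Fin n → ℝ,
      ((∀ i, 0 ≤ p i) ∧ ∑ i, p i = 1 ∧ (∑ i, p i • W i).PosDef) ∧
      ∀ q : Fin n → ℝ, ((∀ i, 0 ≤ q i) ∧ ∑ i, q i = 1 ∧ (∑ i, q i • W i).PosDef) →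
        (Matrix.trace (G * (∑ i, p i • W i)⁻¹)).re
          ≤ (Matrix.trace (G * (∑ i, q i • W i)⁻¹)).re := by
  classical
  obtain ⟨p₀, hp₀n, hp₀s, hp₀pd⟩ := hfeas
  have hn0 : n ≠ 0 := by rintro rfl; simp at hp₀s
  have hN0 : N ≠ 0 := by
    rintro rfl
    exact hli.ne_zero ⟨0, Nat.pos_of_ne_zero hn0⟩ (Subsingleton.elim _ _)
  haveI : Nonempty (Fin N) := ⟨⟨0, Nat.pos_of_ne_zero hN0⟩⟩
  set Wf : (Fin n → ℝ) → Matrix (Fin N) (Fin N) ℂ := fun p => ∑ i, p i • W i with hWf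
  set f : (Fin n → ℝ) → ℝ := fun p => (Matrix.trace (G * (Wf p)⁻¹)).re with hf
  have hWcont : Continuous Wf := by
    apply continuous_finset_sum
    intro i _
    exact (continuous_apply i).smul continuous_const
  set c : ℝ := f p₀ with hc
  obtain ⟨ε, hε, hεpsd⟩ := exists_eps_le hG
  set t : ℝ := max (c / ε) 1 with htdef
  have ht : 0 < t := lt_of_lt_of_le zero_lt_one (le_max_right _ _)
  -- key coercivity claim
  have key : ∀ q : Fin n → ℝ, (Wf q).PosDef → f q ≤ c →
      (Wf q - t⁻¹ • (1 : Matrix (Fin N) (Fin N) ℂ)).PosSemidef := by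
    intro q hqpd hfq
    apply coerce hqpd ht
    have hX : ((Wf q)⁻¹).PosSemidef := hqpd.inv.posSemidef
    have h0 : 0 ≤ Matrix.trace ((G - ε • 1) * (Wf q)⁻¹) := trace_mul_psd_nonneg hεpsd hX
    have hexp : Matrix.trace ((G - ε • 1) * (Wf q)⁻¹)
        = Matrix.trace (G * (Wf q)⁻¹) - (ε : ℂ) * Matrix.trace ((Wf q)⁻¹) := by
      rw [sub_mul, Matrix.trace_sub, real_smul_mat, smul_mul_assoc, one_mul,
        Matrix.trace_smul, smul_eq_mul]
    rw [hexp] at h0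
    have h0re : 0 ≤ (Matrix.trace (G * (Wf q)⁻¹)).re - ε * (Matrix.trace ((Wf q)⁻¹)).re := by
      have := (Complex.le_def.mp h0).1
      have him : (Matrix.trace ((Wf q)⁻¹)).im = 0 :=
        im_zero_of_nonneg (trace_nonneg_of_psd hX)
      simpa [Complex.sub_re, Complex.mul_re, him] using this
    have h1 : ε * (Matrix.trace ((Wf q)⁻¹)).re ≤ c := by
      have : (Matrix.trace (G * (Wf q)⁻¹)).re ≤ c := hfq
      linarith
    have h2 : (Matrix.trace ((Wf q)⁻¹)).re ≤ c / ε := by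
      rw [le_div_iff₀ hε]; linarith [h1, mul_comm ε (Matrix.trace ((Wf q)⁻¹)).re]
    exact h2.trans (le_max_left _ _)
  -- the compact set K
  set Q : (Fin n → ℝ) → Matrix (Fin N) (Fin N) ℂ :=
    fun q => Wf q - t⁻¹ • (1 : Matrix (Fin N) (Fin N) ℂ) with hQ
  have hQcont : Continuous Q := hWcont.sub continuous_const
  set C₁ : Set (Fin n → ℝ) := stdSimplex ℝ (Fin n) ∩ {q | (Q q).PosSemidef} with hC₁
  have hPSDclosed : IsClosed {q : Fin n → ℝ | (Q q).PosSemidef} := by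
    have hset : {q : Fin n → ℝ | (Q q).PosSemidef}
        = {q | (Q q)ᴴ = Q q} ∩ ⋂ x : Fin N → ℂ, {q | 0 ≤ star x ⬝ᵥ (Q q) *ᵥ x} := by
      ext q
      simp only [Set.mem_inter_iff, Set.mem_setOf_eq, Set.mem_iInter]
      exact ⟨fun h => ⟨h.1, h.dotProduct_mulVec_nonneg⟩, fun h => Matrix.PosSemidef.of_dotProduct_mulVec_nonneg h.1 h.2⟩
    rw [hset]
    refine IsClosed.inter (isClosed_eq hQcont.matrix_conjTranspose hQcont) ?_
    refine isClosed_iInter fun x => ?_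
    have hcl : IsClosed {z : ℂ | 0 ≤ z} := by
      have : {z : ℂ | 0 ≤ z} = Complex.re ⁻¹' Set.Ici 0 ∩ Complex.im ⁻¹' {0} := by
        ext z
        simp [Complex.le_def, eq_comm]
      rw [this]
      exact (isClosed_Ici.preimage Complex.continuous_re).inter
        (isClosed_singleton.preimage Complex.continuous_im)
    exact hcl.preimage ((continuous_const.dotProduct (hQcont.matrix_mulVec continuous_const)))
  have hC₁closed : IsClosed C₁ := (isClosed_stdSimplex _ _).inter hPSDclosed
  have hmemPD : ∀ q ∈ C₁, (Wf q).PosDef := by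
    intro q hq
    have hpsd' : (Q q).PosSemidef := hq.2
    have hpd1 : ((t⁻¹ : ℝ) • (1 : Matrix (Fin N) (Fin N) ℂ)).PosDef :=
      posDef_smul Matrix.PosDef.one (inv_pos.mpr ht)
    have := Matrix.PosDef.posSemidef_add hpsd' hpd1
    rwa [hQ, sub_add_cancel] at this
  have hfC₁ : ContinuousOn f C₁ := by
    apply continuousOn_of_forall_continuousAt
    intro q hq
    have hdet : (Wf q).det ≠ 0 := (hmemPD q hq).det_pos.ne'
    have hinv : ContinuousAt Inv.inv (Wf q) := by
      apply continuousAt_matrix_inv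
      rw [Ring.inverse_eq_inv']
      exact continuousAt_inv₀ hdet
    have houter : Continuous (fun M : Matrix (Fin N) (Fin N) ℂ => (Matrix.trace (G * M)).re) :=
      Complex.continuous_re.comp ((continuous_const.matrix_mul continuous_id).matrix_trace)
    exact houter.continuousAt.comp (hinv.comp hWcont.continuousAt)
  set K : Set (Fin n → ℝ) := C₁ ∩ f ⁻¹' Set.Iic c with hK
  have hKclosed : IsClosed K := hfC₁.preimage_isClosed_of_isClosed hC₁closed isClosed_Iic
  have hKcompact : IsCompact K :=
    (isCompact_stdSimplex ℝ (Fin n)).of_isClosed_subset hKclosed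
      (fun q hq => hq.1.1)
  have hp₀K : p₀ ∈ K := by
    exact ⟨⟨⟨hp₀n, hp₀s⟩, key p₀ hp₀pd le_rfl⟩, Set.mem_preimage.mpr (Set.mem_Iic.mpr le_rfl)⟩
  obtain ⟨ps, hpsK, hmin⟩ := hKcompact.exists_isMinOn ⟨p₀, hp₀K⟩ (hfC₁.mono fun q hq => hq.1)
  have hpsPD : (Wf ps).PosDef := hmemPD ps hpsK.1
  have hpsFeas : (∀ i, 0 ≤ ps i) ∧ ∑ i, ps i = 1 ∧ (Wf ps).PosDef :=
    ⟨hpsK.1.1.1, hpsK.1.1.2, hpsPD⟩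
  have hglobal : ∀ q : Fin n → ℝ,
      ((∀ i, 0 ≤ q i) ∧ ∑ i, q i = 1 ∧ (Wf q).PosDef) → f ps ≤ f q := by
    intro q hq
    by_cases hfq : f q ≤ c
    · exact isMinOn_iff.mp hmin q ⟨⟨⟨hq.1, hq.2.1⟩, key q hq.2.2 hfq⟩, hfq⟩
    · push_neg at hfq
      exact le_trans (isMinOn_iff.mp hmin p₀ hp₀K) hfq.le
  refine ⟨ps, ⟨hpsFeas, hglobal⟩, ?_⟩
  -- uniqueness
  rintro q ⟨hqFeas, hqmin⟩
  by_contra hne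
  have h1 : f q ≤ f ps := hqmin ps hpsFeas
  have h2 : f ps ≤ f q := hglobal q hqFeas
  have heq : f q = f ps := le_antisymm h1 h2
  set r : Fin n → ℝ := fun i => 2⁻¹ * (q i + ps i) with hr
  have hrn : ∀ i, 0 ≤ r i := fun i => by
    have := hqFeas.1 i; have := hpsFeas.1 i
    simp only [hr]; positivity
  have hrs : ∑ i, r i = 1 := by
    simp only [hr, ← Finset.mul_sum, Finset.sum_add_distrib, hqFeas.2.1, hpsFeas.2.1]
    norm_num
  have hWr : Wf r = (2⁻¹ : ℝ) • (Wf q + Wf ps) := by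
    simp only [hWf, hr, smul_add, Finset.smul_sum, ← Finset.sum_add_distrib]
    refine Finset.sum_congr rfl fun i _ => ?_
    module
  have hWrPD : (Wf r).PosDef := by
    rw [hWr]
    exact posDef_smul (hqFeas.2.2.add hpsPD) (by norm_num)
  have hWne : Wf q ≠ Wf ps := by
    intro hWeq
    apply hne
    have hz : ∑ i, (q i - ps i) • W i = 0 := by
      simp only [sub_smul, Finset.sum_sub_distrib]
      rw [show (∑ i, q i • W i) = Wf q from rfl, show (∑ i, ps i • W i) = Wf ps from rfl,
        hWeq, sub_self]
    have hcoef := Fintype.linearIndependent_iff.mp hli (fun i => q i - ps i) hz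
    funext i
    have := hcoef i
    linarith [sub_eq_zero.mp this]
  have hstrict := strict_conv hqFeas.2.2 hpsPD hWne hG
  have hfr : f r = (Matrix.trace (G * ((2⁻¹ : ℝ) • (Wf q + Wf ps))⁻¹)).re := by
    simp only [hf]
    rw [hWr]
  have hlt : f r < 2⁻¹ * f q + 2⁻¹ * f ps := by
    rw [hfr]
    exact hstrict
  have hge : f ps ≤ f r := hglobal r ⟨hrn, hrs, hWrPD⟩
  rw [heq] at hlt
  linarith
end

section
/- Let λ, μ ∈ ℂ with Re(λ) = Re(μ) = 0, let k, ℓ ≥ 1, let J₁ = λI_k + N_k and J₂ = μI_ℓ + N_ℓ, let D₁(T) = diag(T^{k−1/2}, …, T^{1/2}) and D₂(T) = diag(T^{ℓ−1/2}, …, T^{1/2}), and let B ∈ ℂ^{k×ℓ} with lower-right entry b = B_{k,ℓ}. Then D₁(T)⁻¹ (∫₀^T e^{J₁t} B e^{J₂*t} dt) D₂(T)^{−*} converges as T → ∞; the limit is the zero matrix if λ ≠ μ, and if λ = μ the limit is b·C, where C ∈ ℂ^{k×ℓ} is the matrix with (a,c) entry 1/((k−a)! (ℓ−c)! (k−a+ℓ−c+1))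 for 1 ≤ a ≤ k, 1 ≤ c ≤ ℓ. -/
open Matrix Filter intervalIntegral

/-- Matrix exponential `e^{tC}` of a complex matrix. -/
noncomputable def cMatExp {k : ℕ} (C : Matrix (Fin k) (Fin k) ℂ) (t : ℝ) :
    Matrix (Fin k) (Fin k) ℂ :=
  NormedSpace.exp ((t : ℂ) • C)

/-- The `k×k` nilpotent Jordan block with ones on the superdiagonal. -/
def nilpBlock (k : ℕ) : Matrix (Fin k) (Fin k) ℂ :=
  Matrix.of fun i j => if (i : ℕ) + 1 = (j : ℕ) then 1 else 0

/-- The scaling matrix `D(T) = diag(T^{k−1/2}, T^{k−3/2}, …, T^{1/2})`. -/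
noncomputable def scaleD (k : ℕ) (T : ℝ) : Matrix (Fin k) (Fin k) ℂ :=
  Matrix.diagonal fun a => ((T ^ ((k : ℝ) - (a : ℕ) - 1/2) : ℝ) : ℂ)

/-- The matrix `C` with (1-indexed) `(a,c)` entry `1/((k−a)! (ℓ−c)! (k−a+ℓ−c+1))`. -/
noncomputable def limMat (k l : ℕ) : Matrix (Fin k) (Fin l) ℂ :=
  Matrix.of fun a c =>
    (((k - 1 - (a : ℕ)).factorial * (l - 1 - (c : ℕ)).factorial *
        ((k - 1 - (a : ℕ)) + (l - 1 - (c : ℕ)) + 1) : ℕ) : ℂ)⁻¹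

lemma nilpBlock_pow (k n : ℕ) (i j : Fin k) :
    (nilpBlock k ^ n) i j = if (i : ℕ) + n = (j : ℕ) then 1 else 0 := by
  induction n generalizing i j with
  | zero => simp [Matrix.one_apply, Fin.ext_iff, eq_comm]
  | succ n ih =>
      rw [pow_succ, Matrix.mul_apply]
      simp only [ih]
      rcases lt_or_ge ((i:ℕ) + n) k with h | h
      · rw [Finset.sum_eq_single ⟨(i:ℕ)+n, h⟩]
        · simp only [if_pos rfl, one_mul, nilpBlock, Matrix.of_apply]
          norm_num [add_assoc]
        · intro x _ hx
          rw [if_neg (fun hh => hx (Fin.ext hh.symm)), zero_mul]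
        · simp
      · rw [Finset.sum_eq_zero, if_neg (by omega)]
        intro x _
        rw [if_neg (by omega), zero_mul]

lemma nilpBlock_pow_self (k : ℕ) : nilpBlock k ^ k = 0 := by
  ext i j; rw [nilpBlock_pow]
  simp only [Matrix.zero_apply]
  rw [if_neg (by omega)]

lemma exp_smul_nilp {k : ℕ} (u : ℂ) (M : Matrix (Fin k) (Fin k) ℂ) (hM : M ^ k = 0) :
    NormedSpace.exp (u • M) = ∑ n ∈ Finset.range k, (u ^ n / n.factorial) • M ^ n := by
  simp only [NormedSpace.exp_eq_tsum ℂ]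
  rw [tsum_eq_sum (s := Finset.range k)]
  · refine Finset.sum_congr rfl fun n _ => ?_
    rw [smul_pow, smul_smul, div_eq_inv_mul]
  · intro n hn
    simp only [Finset.mem_range, not_lt] at hn
    rw [smul_pow, pow_eq_zero_of_le hn hM, smul_zero, smul_zero]

lemma cMatExp_jordan {k : ℕ} (c : ℂ) (t : ℝ) :
    cMatExp (c • (1 : Matrix (Fin k) (Fin k) ℂ) + nilpBlock k) t =
      Complex.exp (c * t) •
        ∑ n ∈ Finset.range k, (((t:ℂ) ^ n / n.factorial)) • nilpBlock k ^ n := by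
  have hcomm : Commute ((t:ℂ) • c • (1 : Matrix (Fin k) (Fin k) ℂ)) ((t:ℂ) • nilpBlock k) := by
    simp only [Commute, SemiconjBy, Matrix.smul_mul, Matrix.mul_smul, smul_smul, one_mul, mul_one]
    ring_nf
  rw [cMatExp, smul_add, Matrix.exp_add_of_commute _ _ hcomm]
  have h1 : (t:ℂ) • c • (1 : Matrix (Fin k) (Fin k) ℂ) =
      Matrix.diagonal (fun _ => c * t) := by
    rw [smul_smul]
    ext i j
    simp only [Matrix.diagonal_apply, Matrix.smul_apply, Matrix.one_apply]
    split <;> simp [mul_comm]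
  rw [h1, Matrix.exp_diagonal, exp_smul_nilp _ _ (nilpBlock_pow_self k)]
  ext i j
  rw [Matrix.diagonal_mul, Matrix.smul_apply, Pi.coe_exp, ← Complex.exp_eq_exp_ℂ]
  rfl

lemma cMatExp_jordan_apply {k : ℕ} (cst : ℂ) (t : ℝ) (i j : Fin k) :
    cMatExp (cst • (1 : Matrix (Fin k) (Fin k) ℂ) + nilpBlock k) t i j =
      Complex.exp (cst * t) *
        (if (i:ℕ) ≤ (j:ℕ) then (t:ℂ)^((j:ℕ)-(i:ℕ)) / ((j:ℕ)-(i:ℕ)).factorial else 0) := by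
  rw [cMatExp_jordan, Matrix.smul_apply, Matrix.sum_apply]
  congr 1
  simp only [Matrix.smul_apply, nilpBlock_pow, smul_eq_mul]
  rcases le_or_gt (i:ℕ) (j:ℕ) with h | h
  · rw [Finset.sum_eq_single ((j:ℕ)-(i:ℕ))]
    · rw [if_pos (by omega : (i:ℕ) + ((j:ℕ)-(i:ℕ)) = (j:ℕ)), mul_one, if_pos h]
    · intro n _ hn
      rw [if_neg (by omega), mul_zero]
    · intro hmem
      exfalso
      exact hmem (Finset.mem_range.2 (by omega))
  · rw [if_neg (by omega), Finset.sum_eq_zero]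
    intro n _
    rw [if_neg (by omega), mul_zero]

lemma cMatExp_conjT {n : ℕ} (M : Matrix (Fin n) (Fin n) ℂ) (t : ℝ) :
    cMatExp Mᴴ t = (cMatExp M t)ᴴ := by
  rw [cMatExp, cMatExp, ← Matrix.exp_conjTranspose]
  congr 1
  rw [Matrix.conjTranspose_smul, Complex.star_def, Complex.conj_ofReal]

lemma cMatExp_jordan_conjT_apply {l : ℕ} (cst : ℂ) (t : ℝ) (j i : Fin l) :
    cMatExp ((cst • (1 : Matrix (Fin l) (Fin l) ℂ) + nilpBlock l)ᴴ) t j i =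
      Complex.exp ((starRingEnd ℂ) cst * t) *
        (if (i:ℕ) ≤ (j:ℕ) then (t:ℂ)^((j:ℕ)-(i:ℕ)) / ((j:ℕ)-(i:ℕ)).factorial else 0) := by
  rw [cMatExp_conjT, Matrix.conjTranspose_apply, cMatExp_jordan_apply]
  rw [star_mul']
  simp only [Complex.star_def]
  rw [← Complex.exp_conj, _root_.map_mul, Complex.conj_ofReal]
  congr 1
  split_ifs
  · rw [map_div₀, map_pow, Complex.conj_ofReal, map_natCast]
  · exact _root_.map_zero _

open Filter intervalIntegral Complex

lemma osc_bound (s : ℝ) (hs : s ≠ 0) (m : ℕ) :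
    ∃ C : ℝ, 0 ≤ C ∧ ∀ T : ℝ, 0 ≤ T →
      ‖∫ t in (0:ℝ)..T, (t:ℂ)^m * Complex.exp ((Complex.I*s)*t)‖ ≤ C * (1+T)^m := by
  have hω : (Complex.I * s) ≠ 0 := mul_ne_zero Complex.I_ne_zero (by exact_mod_cast hs)
  have habs : ‖Complex.I * s‖ = |s| := by
    simp
  have hexp1 : ∀ T : ℝ, ‖Complex.exp ((Complex.I*s)*T)‖ = 1 := by
    intro T
    rw [Complex.norm_exp]
    have : ((Complex.I*s)*T).re = 0 := by simp [Complex.mul_re]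
    rw [this, Real.exp_zero]
  have hv : ∀ x : ℝ, HasDerivAt (fun y : ℝ => Complex.exp ((Complex.I*s) * y) / (Complex.I*s))
      (Complex.exp ((Complex.I*s) * x)) x := by
    intro x
    have h1 : HasDerivAt (fun y : ℝ => ((Complex.I*s) * y : ℂ)) (Complex.I*s) x := by
      simpa using ((hasDerivAt_id ((x:ℝ):ℂ)).const_mul (Complex.I*s)).comp_ofReal
    have h2 := (Complex.hasDerivAt_exp ((Complex.I*s)*x)).comp x h1
    have h3 := h2.div_const (Complex.I*s)
    simpa [mul_div_cancel_right₀ _ hω] using h3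
  induction m with
  | zero =>
      refine ⟨2 / |s|, by positivity, fun T hT => ?_⟩
      simp only [pow_zero, one_mul, mul_one]
      rw [integral_exp_mul_complex hω]
      rw [norm_div]
      gcongr
      calc ‖Complex.exp ((Complex.I*s)*T) - Complex.exp ((Complex.I*s)*(0:ℝ))‖
          ≤ ‖Complex.exp ((Complex.I*s)*T)‖ + ‖Complex.exp ((Complex.I*s)*(0:ℝ))‖ :=
            norm_sub_le _ _
        _ ≤ 2 := by
            rw [hexp1, hexp1]; norm_num
      · rw [habs]
  | succ m ih =>
      obtain ⟨C, hC0, hC⟩ := ih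
      refine ⟨1/|s| + ((m:ℝ)+1)*C/|s|, by positivity, fun T hT => ?_⟩
      have hu : ∀ x ∈ Set.uIcc (0:ℝ) T, HasDerivAt (fun y : ℝ => ((y:ℂ))^(m+1))
          (((m:ℂ)+1) * (x:ℂ)^m) x := by
        intro x _
        have := (hasDerivAt_pow (m+1) ((x:ℝ):ℂ)).comp_ofReal
        simpa [Nat.cast_add] using this
      have hIBP := intervalIntegral.integral_mul_deriv_eq_deriv_mul
        (u := fun y : ℝ => ((y:ℂ))^(m+1)) (v := fun y : ℝ => Complex.exp ((Complex.I*s)*y)/(Complex.I*s))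
        (u' := fun x : ℝ => ((m:ℂ)+1) * (x:ℂ)^m) (v' := fun y : ℝ => Complex.exp ((Complex.I*s)*y))
        hu (fun x _ => hv x)
        (by apply Continuous.intervalIntegrable; fun_prop)
        (by apply Continuous.intervalIntegrable; fun_prop)
      rw [hIBP]
      have hrw : (∫ x in (0:ℝ)..T, ((m:ℂ)+1) * (x:ℂ)^m * (Complex.exp ((Complex.I*s)*x)/(Complex.I*s)))
          = (((m:ℂ)+1)/(Complex.I*s)) * ∫ x in (0:ℝ)..T, (x:ℂ)^m * Complex.exp ((Complex.I*s)*x) := by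
        rw [← intervalIntegral.integral_const_mul]
        congr 1; funext x; ring
      rw [hrw]
      have hb1 : ‖((T:ℂ))^(m+1) * (Complex.exp ((Complex.I*s)*T)/(Complex.I*s)) -
          (((0:ℝ):ℂ))^(m+1) * (Complex.exp ((Complex.I*s)*(0:ℝ))/(Complex.I*s))‖ ≤ (1+T)^(m+1) / |s| := by
        rw [show ((((0:ℝ):ℂ)))^(m+1) = 0 by simp, zero_mul, sub_zero, norm_mul, norm_div, norm_pow,
          hexp1, habs,
          Complex.norm_real, Real.norm_eq_abs, _root_.abs_of_nonneg hT]
        have h5 : T^(m+1) ≤ (1+T)^(m+1) := pow_le_pow_left₀ hT (by linarith) (m+1)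
        have h6 : (0:ℝ) ≤ 1/|s| := by positivity
        calc T^(m+1)*(1/|s|) ≤ (1+T)^(m+1)*(1/|s|) := mul_le_mul_of_nonneg_right h5 h6
          _ = (1+T)^(m+1)/|s| := by ring
      have hb2 : ‖(((m:ℂ)+1)/(Complex.I*s)) * ∫ x in (0:ℝ)..T, (x:ℂ)^m * Complex.exp ((Complex.I*s)*x)‖
          ≤ ((m:ℝ)+1)*C/|s| * (1+T)^(m+1) := by
        rw [norm_mul, norm_div, habs]
        have h1 : ‖((m:ℂ)+1)‖ = (m:ℝ)+1 := by
          rw [show ((m:ℂ)+1) = ((m+1:ℕ):ℂ) by push_cast; ring]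
          rw [Complex.norm_natCast]; push_cast; ring
        rw [h1]
        calc ((m:ℝ)+1)/|s| * ‖∫ x in (0:ℝ)..T, (x:ℂ)^m * Complex.exp ((Complex.I*s)*x)‖
            ≤ ((m:ℝ)+1)/|s| * (C * (1+T)^m) := by
              gcongr
              exact hC T hT
          _ = ((m:ℝ)+1)*C/|s| * (1+T)^m := by ring
          _ ≤ ((m:ℝ)+1)*C/|s| * (1+T)^(m+1) := by
              apply mul_le_mul_of_nonneg_left _ (by positivity)
              exact pow_le_pow_right₀ (by linarith) (Nat.le_succ m)
      calc ‖_ - _‖ ≤ _ := norm_sub_le _ _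
        _ ≤ (1+T)^(m+1)/|s| + ((m:ℝ)+1)*C/|s| * (1+T)^(m+1) := add_le_add hb1 hb2
        _ = (1/|s| + ((m:ℝ)+1)*C/|s|) * (1+T)^(m+1) := by ring

lemma tendsto_inv_rpow_mul (f : ℝ → ℂ) (C : ℝ) (m : ℕ) (r : ℝ) (hr : (m:ℝ) + 1 ≤ r)
    (hf : ∀ T : ℝ, 0 ≤ T → ‖f T‖ ≤ C * (1+T)^m) :
    Filter.Tendsto (fun T : ℝ => ((((T ^ r : ℝ))⁻¹ : ℝ) : ℂ) * f T) Filter.atTop (nhds 0) := by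
  have hC0 : 0 ≤ C := by
    have := hf 0 le_rfl
    simp at this
    exact le_trans (norm_nonneg _) this
  have hg : Filter.Tendsto (fun T : ℝ => (C * 2^m) * T ^ ((m:ℝ) - r)) Filter.atTop (nhds 0) := by
    have h3 : (0:ℝ) < r - m := by linarith
    have := (tendsto_rpow_neg_atTop h3).const_mul (C * 2^m)
    rw [mul_zero] at this
    convert this using 2 with T
    rw [neg_sub]
  apply squeeze_zero_norm' _ hg
  · filter_upwards [Filter.eventually_ge_atTop (1:ℝ)] with T hT
    have hT0 : (0:ℝ) < T := by linarith
    have h1 : ‖((((T ^ r : ℝ))⁻¹ : ℝ) : ℂ) * f T‖ = (T ^ r)⁻¹ * ‖f T‖ := by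
      rw [norm_mul, Complex.norm_real, Real.norm_eq_abs, abs_inv,
        _root_.abs_of_nonneg (Real.rpow_nonneg hT0.le r)]
    rw [h1]
    have h2 : ‖f T‖ ≤ C * (2*T)^m := by
      refine (hf T hT0.le).trans ?_
      gcongr
      linarith
    calc (T ^ r)⁻¹ * ‖f T‖ ≤ (T ^ r)⁻¹ * (C * (2*T)^m) := by
          gcongr
      _ = (C * 2^m) * (T^(m:ℝ) / T^r) := by
          rw [Real.rpow_natCast]
          ring
      _ = (C * 2^m) * T ^ ((m:ℝ) - r) := by
          rw [← Real.rpow_sub hT0]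

set_option maxHeartbeats 2000000 in
theorem stmt14 (k l : ℕ) (hk : 1 ≤ k) (hl : 1 ≤ l)
    (lam mu : ℂ) (hlam : lam.re = 0) (hmu : mu.re = 0)
    (J₁ : Matrix (Fin k) (Fin k) ℂ)
    (hJ₁ : J₁ = lam • (1 : Matrix (Fin k) (Fin k) ℂ) + nilpBlock k)
    (J₂ : Matrix (Fin l) (Fin l) ℂ)
    (hJ₂ : J₂ = mu • (1 : Matrix (Fin l) (Fin l) ℂ) + nilpBlock l)
    (B : Matrix (Fin k) (Fin l) ℂ) (b : ℂ) (hb : b = B ⟨k - 1, by omega⟩ ⟨l - 1, by omega⟩) :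
    ∀ a c, Filter.Tendsto
      (fun T : ℝ =>
        ((scaleD k T)⁻¹ *
          (Matrix.of fun a' c' =>
            ∫ t in (0:ℝ)..T, (cMatExp J₁ t * B * cMatExp J₂ᴴ t) a' c') *
          ((scaleD l T)⁻¹)ᴴ) a c)
      Filter.atTop (nhds (if lam = mu then b * limMat k l a c else 0)) := by
  intro a c
  have hak : (a:ℕ) < k := a.isLt
  have hcl : (c:ℕ) < l := c.isLt
  set ω : ℂ := lam + (starRingEnd ℂ) mu with hωdef
  have hconjmu : (starRingEnd ℂ) mu = -mu := by
    apply Complex.ext <;> simp [hmu]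
  have hωlm : ω = lam - mu := by rw [hωdef, hconjmu]; ring
  have hωre : ω.re = 0 := by rw [hωlm]; simp [hlam, hmu]
  set coeff : Fin k → Fin l → ℂ := fun i j =>
    if (a:ℕ) ≤ (i:ℕ) ∧ (c:ℕ) ≤ (j:ℕ) then
      B i j / ((((i:ℕ)-(a:ℕ)).factorial : ℂ) * (((j:ℕ)-(c:ℕ)).factorial : ℂ)) else 0 with hcoeff
  set md : Fin k → Fin l → ℕ := fun i j => ((i:ℕ)-(a:ℕ)) + ((j:ℕ)-(c:ℕ)) with hmd
  set rr : ℝ := ((k:ℝ) - (a:ℕ) - 1/2) + ((l:ℝ) - (c:ℕ) - 1/2) with hrr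
  -- entrywise formula for the integrand
  have hEntry : ∀ t : ℝ, (cMatExp J₁ t * B * cMatExp J₂ᴴ t) a c =
      ∑ i : Fin k, ∑ j : Fin l, coeff i j * ((t:ℂ)^(md i j) * Complex.exp (ω * t)) := by
    intro t
    rw [Matrix.mul_apply]
    simp only [Matrix.mul_apply, Finset.sum_mul]
    rw [Finset.sum_comm]
    refine Finset.sum_congr rfl fun i _ => Finset.sum_congr rfl fun j _ => ?_
    rw [hJ₁, hJ₂, cMatExp_jordan_apply, cMatExp_jordan_conjT_apply]
    have hf1 : ((((i:ℕ)-(a:ℕ)).factorial : ℂ)) ≠ 0 := Nat.cast_ne_zero.2 (Nat.factorial_ne_zero _)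
    have hf2 : ((((j:ℕ)-(c:ℕ)).factorial : ℂ)) ≠ 0 := Nat.cast_ne_zero.2 (Nat.factorial_ne_zero _)
    have hexp : Complex.exp (lam * t) * Complex.exp ((starRingEnd ℂ) mu * t)
        = Complex.exp (ω * t) := by
      rw [← Complex.exp_add, hωdef, add_mul]
    simp only [hcoeff, hmd]
    by_cases h1 : (a:ℕ) ≤ (i:ℕ) <;> by_cases h2 : (c:ℕ) ≤ (j:ℕ)
    · rw [if_pos h1, if_pos h2, if_pos ⟨h1, h2⟩, pow_add, ← hexp]
      field_simp
    · rw [if_neg h2, if_neg (show ¬((a:ℕ) ≤ (i:ℕ) ∧ (c:ℕ) ≤ (j:ℕ)) from fun h => h2 h.2)]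
      simp
    · rw [if_neg h1, if_neg (show ¬((a:ℕ) ≤ (i:ℕ) ∧ (c:ℕ) ≤ (j:ℕ)) from fun h => h1 h.1)]
      simp
    · rw [if_neg h1, if_neg (show ¬((a:ℕ) ≤ (i:ℕ) ∧ (c:ℕ) ≤ (j:ℕ)) from fun h => h1 h.1)]
      simp
  have hcont : ∀ (i : Fin k) (j : Fin l),
      Continuous (fun t : ℝ => coeff i j * ((t:ℂ)^(md i j) * Complex.exp (ω * t))) := by
    intro i j
    fun_prop
  have hInt : ∀ T : ℝ, (∫ t in (0:ℝ)..T, (cMatExp J₁ t * B * cMatExp J₂ᴴ t) a c) =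
      ∑ i : Fin k, ∑ j : Fin l,
        coeff i j * ∫ t in (0:ℝ)..T, (t:ℂ)^(md i j) * Complex.exp (ω * t) := by
    intro T
    rw [intervalIntegral.integral_congr (g := fun t : ℝ =>
      ∑ i : Fin k, ∑ j : Fin l, coeff i j * ((t:ℂ)^(md i j) * Complex.exp (ω * t)))
      (fun t _ => hEntry t)]
    rw [intervalIntegral.integral_finset_sum]
    · refine Finset.sum_congr rfl fun i _ => ?_
      rw [intervalIntegral.integral_finset_sum]
      · exact Finset.sum_congr rfl fun j _ => intervalIntegral.integral_const_mul _ _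
      · intro j _
        exact (hcont i j).intervalIntegrable _ _
    · intro i _
      exact (continuous_finset_sum _ fun j _ => hcont i j).intervalIntegrable _ _
  have hDinv : ∀ (n : ℕ) (T : ℝ), 0 < T → (scaleD n T)⁻¹ =
      Matrix.diagonal (fun x : Fin n => ((((T ^ ((n:ℝ) - (x:ℕ) - 1/2) : ℝ))⁻¹ : ℝ) : ℂ)) := by
    intro n T hT
    apply Matrix.inv_eq_right_inv
    rw [scaleD, Matrix.diagonal_mul_diagonal]
    ext x y
    rcases eq_or_ne x y with rfl | hxy
    · rw [Matrix.diagonal_apply_eq, Matrix.one_apply_eq, ← Complex.ofReal_mul,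
        mul_inv_cancel₀ (Real.rpow_pos_of_pos hT _).ne', Complex.ofReal_one]
    · rw [Matrix.diagonal_apply_ne _ hxy, Matrix.one_apply_ne hxy]
  have hEq : (fun T : ℝ =>
        ((scaleD k T)⁻¹ *
          (Matrix.of fun a' c' =>
            ∫ t in (0:ℝ)..T, (cMatExp J₁ t * B * cMatExp J₂ᴴ t) a' c') *
          ((scaleD l T)⁻¹)ᴴ) a c)
      =ᶠ[Filter.atTop] fun T : ℝ => ∑ i : Fin k, ∑ j : Fin l,
          coeff i j * (((((T ^ rr : ℝ))⁻¹ : ℝ) : ℂ) *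
            ∫ t in (0:ℝ)..T, (t:ℂ)^(md i j) * Complex.exp (ω * t)) := by
    filter_upwards [Filter.eventually_gt_atTop (0:ℝ)] with T hT
    rw [hDinv k T hT, hDinv l T hT, Matrix.diagonal_conjTranspose, Matrix.mul_diagonal,
      Matrix.diagonal_mul, Matrix.of_apply, hInt T, Finset.mul_sum, Finset.sum_mul]
    refine Finset.sum_congr rfl fun i _ => ?_
    rw [Finset.mul_sum, Finset.sum_mul]
    refine Finset.sum_congr rfl fun j _ => ?_
    have hstar : star (((((T ^ ((l:ℝ) - (c:ℕ) - 1/2) : ℝ))⁻¹ : ℝ)) : ℂ)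
        = ((((T ^ ((l:ℝ) - (c:ℕ) - 1/2) : ℝ))⁻¹ : ℝ) : ℂ) := by
      rw [Complex.star_def, Complex.conj_ofReal]
    have hmul : ((((T ^ ((k:ℝ) - (a:ℕ) - 1/2) : ℝ))⁻¹ : ℝ) : ℂ) *
        ((((T ^ ((l:ℝ) - (c:ℕ) - 1/2) : ℝ))⁻¹ : ℝ) : ℂ) = ((((T ^ rr : ℝ))⁻¹ : ℝ) : ℂ) := by
      rw [← Complex.ofReal_mul, ← mul_inv, ← Real.rpow_add hT]
    simp only [Pi.star_apply, hstar]
    rw [← hmul]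
    ring
  have hterm : ∀ (i : Fin k) (j : Fin l),
      Filter.Tendsto (fun T : ℝ => coeff i j * (((((T ^ rr : ℝ))⁻¹ : ℝ) : ℂ) *
          ∫ t in (0:ℝ)..T, (t:ℂ)^(md i j) * Complex.exp (ω * t)))
        Filter.atTop (nhds (if lam = mu then
          (if (i:ℕ) = k-1 ∧ (j:ℕ) = l-1 then b * limMat k l a c else 0) else 0)) := by
    intro i j
    by_cases hlm : lam = mu
    · have hω0 : ω = 0 := by rw [hωlm, hlm, sub_self]
      rw [if_pos hlm]
      have hI : ∀ T : ℝ, (∫ t in (0:ℝ)..T, (t:ℂ)^(md i j) * Complex.exp (ω * t)) =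
          ((T^(md i j + 1)/(md i j + 1) : ℝ) : ℂ) := by
        intro T
        simp only [hω0, zero_mul, Complex.exp_zero, mul_one]
        have hcast : (fun t : ℝ => ((t:ℂ))^(md i j)) = fun t : ℝ => (((t^(md i j) : ℝ)) : ℂ) := by
          funext t; push_cast; ring
        rw [hcast, intervalIntegral.integral_ofReal, integral_pow]
        norm_num
      by_cases hcond : (a:ℕ) ≤ (i:ℕ) ∧ (c:ℕ) ≤ (j:ℕ)
      · by_cases htop : (i:ℕ) = k-1 ∧ (j:ℕ) = l-1
        · rw [if_pos htop]
          refine Filter.Tendsto.congr' ?_ tendsto_const_nhds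
          filter_upwards [Filter.eventually_ge_atTop (1:ℝ)] with T hT1
          have hT0 : (0:ℝ) < T := by linarith
          rw [hI T]
          have hnat : md i j + (a:ℕ) + (c:ℕ) + 2 = k + l := by
            simp only [hmd]; omega
          have hcastn : (md i j : ℝ) + (a:ℕ) + (c:ℕ) + 2 = (k:ℝ) + l := by
            exact_mod_cast hnat
          have hrrm : rr = ((md i j : ℝ) + 1) := by rw [hrr]; linarith
          have hpow : (T ^ rr : ℝ) = T ^ (md i j + 1) := by
            rw [hrrm, show ((md i j:ℝ)+1) = ((md i j + 1 : ℕ):ℝ) by push_cast; ring,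
              Real.rpow_natCast]
          rw [hpow, ← Complex.ofReal_mul]
          have hTne : (T:ℝ)^(md i j + 1) ≠ 0 := by positivity
          have harith : (T ^ (md i j + 1))⁻¹ * (T ^ (md i j + 1) / ((md i j : ℝ) + 1))
              = ((md i j : ℝ) + 1)⁻¹ := by
            field_simp
          rw [harith]
          have hmdval : md i j = (k-1-(a:ℕ)) + (l-1-(c:ℕ)) := by
            simp only [hmd, htop.1, htop.2]
          have hBij : B i j = b := by
            rw [hb]
            congr 1
            · exact Fin.ext htop.1
            · exact Fin.ext htop.2
          simp only [hcoeff, if_pos hcond, limMat, Matrix.of_apply, hmdval, hBij,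
            htop.1, htop.2]
          have f1 : (((k-1-(a:ℕ)).factorial : ℂ)) ≠ 0 := Nat.cast_ne_zero.2 (Nat.factorial_ne_zero _)
          have f2 : (((l-1-(c:ℕ)).factorial : ℂ)) ≠ 0 := Nat.cast_ne_zero.2 (Nat.factorial_ne_zero _)
          have f3 : ((((k-1-(a:ℕ)) + (l-1-(c:ℕ)) + 1 : ℕ)) : ℂ) ≠ 0 :=
            Nat.cast_ne_zero.2 (by omega)
          push_cast
          field_simp
        · rw [if_neg htop]
          set y : ℝ := rr - ((md i j : ℝ) + 1) with hy
          have hnat : md i j + (a:ℕ) + (c:ℕ) + 3 ≤ k + l := by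
            simp only [hmd]; omega
          have hcastn : (md i j : ℝ) + (a:ℕ) + (c:ℕ) + 3 ≤ (k:ℝ) + l := by
            exact_mod_cast hnat
          have hy0 : 0 < y := by rw [hy, hrr]; linarith
          have hten : Filter.Tendsto (fun T : ℝ => ((T ^ (-y) : ℝ) : ℂ))
              Filter.atTop (nhds 0) := by
            have h1 := tendsto_rpow_neg_atTop hy0
            have h2 := (Complex.continuous_ofReal.tendsto (0:ℝ)).comp h1
            simpa [Function.comp_def] using h2
          have hten2 := hten.const_mul (coeff i j * ((((md i j : ℝ) + 1)⁻¹ : ℝ) : ℂ))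
          rw [mul_zero] at hten2
          refine Filter.Tendsto.congr' ?_ hten2
          filter_upwards [Filter.eventually_ge_atTop (1:ℝ)] with T hT1
          have hT0 : (0:ℝ) < T := by linarith
          rw [hI T]
          have hX : (T ^ rr : ℝ)⁻¹ * (T^(md i j + 1)/(md i j + 1))
              = T ^ (-y) * ((md i j : ℝ) + 1)⁻¹ := by
            have h5 : (T:ℝ) ^ (-y) = T ^ ((md i j : ℝ) + 1) / T ^ rr := by
              rw [hy, neg_sub, Real.rpow_sub hT0]
            have h6 : (T:ℝ) ^ ((md i j : ℝ) + 1) = T ^ (md i j + 1) := by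
              rw [show ((md i j:ℝ)+1) = ((md i j + 1 : ℕ):ℝ) by push_cast; ring,
                Real.rpow_natCast]
            rw [h5, h6]
            have h7 : (T:ℝ) ^ rr ≠ 0 := (Real.rpow_pos_of_pos hT0 _).ne'
            field_simp
          rw [← Complex.ofReal_mul, hX]
          push_cast
          ring
      · have hc0 : coeff i j = 0 := by simp only [hcoeff]; rw [if_neg hcond]
        have htop : ¬((i:ℕ) = k-1 ∧ (j:ℕ) = l-1) := by
          rintro ⟨g1, g2⟩; exact hcond (by omega)
        rw [if_neg htop]
        simp only [hc0, zero_mul]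
        exact tendsto_const_nhds
    · rw [if_neg hlm]
      have hωne : ω ≠ 0 := by rw [hωlm]; exact sub_ne_zero.2 hlm
      set s : ℝ := ω.im with hsdef
      have hs : s ≠ 0 := by
        intro h
        exact hωne (Complex.ext (by simpa using hωre) (by simpa [hsdef] using h))
      have hωI : ω = Complex.I * (s:ℂ) := by
        apply Complex.ext
        · simpa using hωre
        · simp [hsdef]
      have hmr : ((md i j : ℕ) : ℝ) + 1 ≤ rr := by
        have hn : md i j + (a:ℕ) + (c:ℕ) + 2 ≤ k + l := by simp only [hmd]; omega
        have h2 : (md i j : ℝ) + (a:ℕ) + (c:ℕ) + 2 ≤ (k:ℝ) + l := by exact_mod_cast hn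
        rw [hrr]; linarith
      obtain ⟨C, hC0, hC⟩ := osc_bound s hs (md i j)
      have hten := tendsto_inv_rpow_mul
        (fun T => ∫ t in (0:ℝ)..T, (t:ℂ)^(md i j) * Complex.exp (ω * t)) C (md i j) rr hmr
        (fun T hT => by rw [hωI]; exact hC T hT)
      have hten2 := hten.const_mul (coeff i j)
      rw [mul_zero] at hten2
      exact hten2
  have hLsum : (∑ i : Fin k, ∑ j : Fin l, (if lam = mu then
      (if (i:ℕ) = k-1 ∧ (j:ℕ) = l-1 then b * limMat k l a c else 0) else 0))
      = (if lam = mu then b * limMat k l a c else 0) := by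
    by_cases hlm : lam = mu
    · simp only [if_pos hlm]
      rw [Finset.sum_eq_single (⟨k-1, by omega⟩ : Fin k)]
      · rw [Finset.sum_eq_single (⟨l-1, by omega⟩ : Fin l)]
        · rw [if_pos ⟨rfl, rfl⟩]
        · intro j _ hj
          rw [if_neg]
          rintro ⟨-, g2⟩
          exact hj (Fin.ext g2)
        · simp
      · intro i _ hi
        rw [Finset.sum_eq_zero]
        intro j _
        rw [if_neg]
        rintro ⟨g1, -⟩
        exact hi (Fin.ext g1)
      · simp
    · simp [hlm]
  rw [← hLsum]
  exact Filter.Tendsto.congr' hEq.symm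
    (tendsto_finset_sum _ (fun i _ => tendsto_finset_sum _ (fun j _ => hterm i j)))
end
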